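/- arXiv:1107.0228 — 2 statements merged into one kernel-verified Lean document; each statement's English description precedes it below -/
import Mathlib

section
/- The probability measure π(dk) = (1/8)Φ(k)dk on the two-dimensional torus 𝕋² is a probability measure and is invariant for the Markov transition kernel P, i.e. ∫_{𝕋²} π(dk) P(k,A) = π(A) for every Borel set A ⊆ 𝕋². -/
open MeasureTheory Real Filter Set
open scoped ENNReal NNReal

noncomputable section

instance : Fact ((0:ℝ) < 1) := ⟨one_pos⟩

/-- The one-dimensional torus `ℝ/ℤ`. -/
abbrev Torus := AddCircle (1 : ℝ)

/-- The two-dimensional torus `𝕋²`. -/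
abbrev T2 := Torus × Torus

lemma sin_sq_periodic : Function.Periodic (fun x : ℝ => Real.sin (π * x) ^ 2) 1 := by
  intro x
  simp only []
  have h : π * (x + 1) = π * x + π := by ring
  rw [h, Real.sin_add_pi]
  ring

lemma sincos_periodic :
    Function.Periodic (fun x : ℝ => Real.sin (π * x) * Real.cos (π * x)) 1 := by
  intro x
  simp only []
  have h : π * (x + 1) = π * x + π := by ring
  rw [h, Real.sin_add_pi, Real.cos_add_pi]
  ring

/-- `sin²(π k)` as a function on the circle. -/
def sin2 : Torus → ℝ := sin_sq_periodic.lift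

/-- `sin(π k) cos(π k)` as a function on the circle. -/
def sincos : Torus → ℝ := sincos_periodic.lift

/-- The components of a point of the torus. -/
def tcomp (k : T2) : Fin 2 → Torus := ![k.1, k.2]

/-- `Φ(k) = 8 ∑_α sin²(π k_α)`. -/
def Phi (k : T2) : ℝ := 8 * (sin2 k.1 + sin2 k.2)

/-- The scattering kernel `R(k,k') = 16 ∑_α sin²(π k_α) sin²(π k'_α)`. -/
def Rker (k k' : T2) : ℝ := 16 * (sin2 k.1 * sin2 k'.1 + sin2 k.2 * sin2 k'.2)

/-- The velocity `v_α(k) = sin(π k_α) cos(π k_α) / (∑_β sin²(π k_β))^{1/2}`. -/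
def vel (α : Fin 2) (k : T2) : ℝ :=
  sincos (tcomp k α) / Real.sqrt (sin2 k.1 + sin2 k.2)

/-- `ψ(k) = Φ(k)⁻¹ v(k)`. -/
def psiC (α : Fin 2) (k : T2) : ℝ := vel α k / Phi k

/-- The Markov transition kernel `P(k,dk') = Φ(k)⁻¹ R(k,k') dk'` on `𝕋²`. -/
def Pker (k : T2) : Measure T2 :=
  (volume : Measure T2).withDensity fun k' => ENNReal.ofReal ((Phi k)⁻¹ * Rker k k')

/-- The `m`-step kernel (`Pn 0 k` is the Dirac mass at `k`). -/
def Pn : ℕ → T2 → Measure T2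
  | 0, k => Measure.dirac k
  | (m + 1), k => (Pn m k).bind Pker

/-- The measure `π(dk) = (1/8) Φ(k) dk`. -/
def piM : Measure T2 :=
  (volume : Measure T2).withDensity fun k => ENNReal.ofReal ((1 / 8) * Phi k)

/-- The exponential distribution with mean one. -/
def expMeasure : Measure ℝ :=
  (volume : Measure ℝ).withDensity fun z =>
    if 0 ≤ z then ENNReal.ofReal (Real.exp (-z)) else 0

/-! ### Auxiliary lemmas -/

lemma continuous_sin2 : Continuous sin2 :=
  Continuous.quotient_liftOn' (by continuity) _

lemma sin2_nonneg (x : Torus) : 0 ≤ sin2 x := by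
  induction x using QuotientAddGroup.induction_on with
  | H a =>
    rw [show sin2 (a : Torus) = Real.sin (π * a) ^ 2 from sin_sq_periodic.lift_coe a]
    positivity

lemma Phi_nonneg (k : T2) : 0 ≤ Phi k := by
  have := sin2_nonneg k.1; have := sin2_nonneg k.2
  unfold Phi; linarith

lemma continuous_Phi : Continuous Phi :=
  continuous_const.mul ((continuous_sin2.comp continuous_fst).add
    (continuous_sin2.comp continuous_snd))

lemma continuous_Rker_right (k : T2) : Continuous (Rker k) := by
  unfold Rker
  exact continuous_const.mul
    (((continuous_const.mul (continuous_sin2.comp continuous_fst))).add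
      (continuous_const.mul (continuous_sin2.comp continuous_snd)))

lemma measurable_Rker_pair : Measurable (fun p : T2 × T2 => Rker p.1 p.2) := by
  unfold Rker
  refine measurable_const.mul (Measurable.add (Measurable.mul ?_ ?_) (Measurable.mul ?_ ?_))
  · exact continuous_sin2.measurable.comp (measurable_fst.comp measurable_fst)
  · exact continuous_sin2.measurable.comp (measurable_fst.comp measurable_snd)
  · exact continuous_sin2.measurable.comp (measurable_snd.comp measurable_fst)
  · exact continuous_sin2.measurable.comp (measurable_snd.comp measurable_snd)

lemma integral_sin2 : ∫ x : Torus, sin2 x = 1 / 2 := by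
  rw [← AddCircle.intervalIntegral_preimage 1 0 sin2]
  simp only [sin2, sin_sq_periodic.lift_coe, zero_add]
  rw [intervalIntegral.integral_comp_mul_left (fun x => Real.sin x ^ 2) pi_ne_zero]
  rw [mul_zero, mul_one, integral_sin_sq]
  simp [Real.sin_pi, Real.cos_pi]
  field_simp

lemma torus_measure_univ : (volume : Measure Torus) univ = 1 := by
  rw [AddCircle.measure_univ]; norm_num

lemma integrable_cont {f : T2 → ℝ} (hf : Continuous f) : Integrable f volume :=
  hf.integrable_of_hasCompactSupport (HasCompactSupport.of_compactSpace f)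

lemma integral_lin (c1 c2 : ℝ) :
    ∫ k : T2, (sin2 k.1 * c1 + sin2 k.2 * c2) = (1/2) * c1 + (1/2) * c2 := by
  have h1 : Integrable (fun k : T2 => sin2 k.1 * c1) volume :=
    integrable_cont ((continuous_sin2.comp continuous_fst).mul continuous_const)
  have h2 : Integrable (fun k : T2 => sin2 k.2 * c2) volume :=
    integrable_cont ((continuous_sin2.comp continuous_snd).mul continuous_const)
  rw [integral_add h1 h2]
  have e1 : ∫ k : T2, sin2 k.1 * c1 = (1/2) * c1 := by
    rw [Measure.volume_eq_prod]
    have := integral_prod_mul (μ := (volume : Measure Torus)) (ν := (volume : Measure Torus))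
      sin2 (fun _ => c1)
    simp only [integral_sin2, integral_const, measureReal_def, torus_measure_univ, ENNReal.toReal_one,
      one_smul] at this
    exact this
  have e2 : ∫ k : T2, sin2 k.2 * c2 = (1/2) * c2 := by
    rw [MeasureTheory.integral_mul_const]
    rw [Measure.volume_eq_prod]
    have := integral_prod_mul (μ := (volume : Measure Torus)) (ν := (volume : Measure Torus))
      (fun _ => (1:ℝ)) sin2
    simp only [one_mul, integral_const, measureReal_def, torus_measure_univ, ENNReal.toReal_one, one_smul,
      integral_sin2] at this
    rw [this]
  rw [e1, e2]

lemma lintegral_lin (c1 c2 : ℝ) (hc1 : 0 ≤ c1) (hc2 : 0 ≤ c2) :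
    ∫⁻ k : T2, ENNReal.ofReal (sin2 k.1 * c1 + sin2 k.2 * c2)
      = ENNReal.ofReal ((1/2) * c1 + (1/2) * c2) := by
  rw [← integral_lin c1 c2, ofReal_integral_eq_lintegral_ofReal]
  · exact integrable_cont (((continuous_sin2.comp continuous_fst).mul continuous_const).add
      ((continuous_sin2.comp continuous_snd).mul continuous_const))
  · refine ae_of_all _ fun k => ?_
    simp only [Pi.zero_apply]
    exact add_nonneg (mul_nonneg (sin2_nonneg k.1) hc1) (mul_nonneg (sin2_nonneg k.2) hc2)

lemma key_eq (k k' : T2) :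
    (1/8) * Phi k * ((Phi k)⁻¹ * Rker k k') = (1/8) * Rker k k' := by
  by_cases h : Phi k = 0
  · have hsum : sin2 k.1 + sin2 k.2 = 0 := by
      unfold Phi at h; linarith
    have h1 : sin2 k.1 = 0 :=
      le_antisymm (by linarith [sin2_nonneg k.2]) (sin2_nonneg k.1)
    have h2 : sin2 k.2 = 0 :=
      le_antisymm (by linarith [sin2_nonneg k.1]) (sin2_nonneg k.2)
    rw [h]
    unfold Rker
    rw [h1, h2]
    ring
  · rw [show (1/8) * Phi k * ((Phi k)⁻¹ * Rker k k')
        = (1/8) * (Phi k * (Phi k)⁻¹) * Rker k k' from by ring,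
      mul_inv_cancel₀ h]
    ring

lemma lintegral_RK (k' : T2) :
    ∫⁻ k : T2, ENNReal.ofReal ((1/8) * Rker k k') = ENNReal.ofReal ((1/8) * Phi k') := by
  have h : ∀ k : T2, (1/8) * Rker k k'
      = sin2 k.1 * (2 * sin2 k'.1) + sin2 k.2 * (2 * sin2 k'.2) := by
    intro k; unfold Rker; ring
  simp_rw [h]
  rw [lintegral_lin _ _ (by linarith [sin2_nonneg k'.1]) (by linarith [sin2_nonneg k'.2])]
  congr 1
  unfold Phi; ring

lemma measurable_g (k : T2) :
    Measurable fun k' : T2 => ENNReal.ofReal ((Phi k)⁻¹ * Rker k k') := by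
  apply ENNReal.measurable_ofReal.comp
  exact measurable_const.mul (continuous_Rker_right k).measurable

lemma measurable_gpair :
    Measurable fun p : T2 × T2 => ENNReal.ofReal ((Phi p.1)⁻¹ * Rker p.1 p.2) := by
  apply ENNReal.measurable_ofReal.comp
  exact ((continuous_Phi.measurable.comp measurable_fst).inv).mul measurable_Rker_pair

lemma measurable_Pker_apply {s : Set T2} (hs : MeasurableSet s) :
    Measurable fun k => Pker k s := by
  simp_rw [Pker, withDensity_apply _ hs]
  exact Measurable.lintegral_prod_right' measurable_gpair

lemma measurable_Pker : Measurable Pker :=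
  Measure.measurable_of_measurable_coe _ fun _ hs => measurable_Pker_apply hs

/-- `π(dk) = (1/8)Φ(k)dk` is a probability measure on `𝕋²` and is
invariant for the Markov kernel `P`: `∫ π(dk) P(k,·) = π`. -/
theorem piM_isProbability_and_invariant :
    IsProbabilityMeasure piM ∧ piM.bind Pker = piM := by
  have mf : Measurable fun k : T2 => ENNReal.ofReal ((1/8) * Phi k) :=
    ENNReal.measurable_ofReal.comp (measurable_const.mul continuous_Phi.measurable)
  constructor
  · constructor
    rw [piM, withDensity_apply _ MeasurableSet.univ, Measure.restrict_univ]
    have h : ∀ k : T2, (1/8 : ℝ) * Phi k = sin2 k.1 * 1 + sin2 k.2 * 1 := by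
      intro k; unfold Phi; ring
    simp_rw [h]
    rw [lintegral_lin 1 1 zero_le_one zero_le_one]
    norm_num
  · ext s hs
    rw [Measure.bind_apply hs measurable_Pker.aemeasurable]
    rw [piM, lintegral_withDensity_eq_lintegral_mul _ mf (measurable_Pker_apply hs)]
    have step1 : ∫⁻ k, ((fun k : T2 => ENNReal.ofReal ((1/8) * Phi k)) * fun k => Pker k s) k
        = ∫⁻ k, ∫⁻ k' in s, ENNReal.ofReal ((1/8) * Rker k k') ∂volume := by
      refine lintegral_congr fun k => ?_
      simp only [Pi.mul_apply]
      rw [Pker, withDensity_apply _ hs,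
        ← lintegral_const_mul _ (measurable_g k)]
      refine lintegral_congr fun k' => ?_
      rw [← ENNReal.ofReal_mul (mul_nonneg (by norm_num) (Phi_nonneg k)), key_eq]
    rw [step1]
    have hswap : AEMeasurable (Function.uncurry fun k k' : T2 =>
        ENNReal.ofReal ((1/8) * Rker k k'))
        ((volume : Measure T2).prod ((volume : Measure T2).restrict s)) := by
      apply Measurable.aemeasurable
      exact ENNReal.measurable_ofReal.comp (measurable_const.mul measurable_Rker_pair)
    rw [lintegral_lintegral_swap hswap]
    rw [withDensity_apply _ hs]
    exact lintegral_congr fun k' => lintegral_RK k'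

end
end

section
/- For every m ≥ 1 and every k ∈ 𝕋², the m-step transition kernel has the explicit form Pᵐ(k,dk') = (2/∑_{γ=1}^2 sin²(πk_γ)) ∑_{α=1}^2 ∑_{β=1}^2 sin²(πk_α) A^{(m)}_{α,β} sin²(πk'_β) dk', where A^{(1)}_{α,β} = δ_{α,β} and A^{(m+1)} = aᵐ (the m-th power of the matrix a) for all m ≥ 1. -/
open MeasureTheory Real Filter Set
open scoped ENNReal NNReal

noncomputable section

/-- The matrix `a` with `a₁₁ = a₂₂ = 2∫ sin⁴(πk₁)/(∑_α sin²(πk_α)) dk` and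
`a₁₂ = a₂₁ = 2∫ sin²(πk₁)sin²(πk₂)/(∑_α sin²(πk_α)) dk`. -/
def aMat : Matrix (Fin 2) (Fin 2) ℝ :=
  Matrix.of fun i j =>
    if i = j then 2 * ∫ k : T2, (sin2 k.1) ^ 2 / (sin2 k.1 + sin2 k.2)
    else 2 * ∫ k : T2, sin2 k.1 * sin2 k.2 / (sin2 k.1 + sin2 k.2)

/-- `A^(1) = Id`, `A^(m+1) = aᵐ` for `m ≥ 1`. -/
def Amat (m : ℕ) : Matrix (Fin 2) (Fin 2) ℝ := aMat ^ (m - 1)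

lemma sin2_coe (x : ℝ) : sin2 (x : Torus) = Real.sin (π * x) ^ 2 :=
  sin_sq_periodic.lift_coe x

lemma measurable_sin2 : Measurable sin2 := continuous_sin2.measurable

lemma measurable_rho : Measurable (fun p : T2 × T2 => ENNReal.ofReal ((Phi p.1)⁻¹ * Rker p.1 p.2)) := by
  have m1 : Measurable (fun p : T2 × T2 => sin2 p.1.1) := measurable_sin2.comp (measurable_fst.comp measurable_fst)
  have m2 : Measurable (fun p : T2 × T2 => sin2 p.1.2) := measurable_sin2.comp (measurable_snd.comp measurable_fst)
  have m3 : Measurable (fun p : T2 × T2 => sin2 p.2.1) := measurable_sin2.comp (measurable_fst.comp measurable_snd)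
  have m4 : Measurable (fun p : T2 × T2 => sin2 p.2.2) := measurable_sin2.comp (measurable_snd.comp measurable_snd)
  exact ENNReal.measurable_ofReal.comp
    ((((m1.add m2).const_mul (8:ℝ)).inv).mul (((m1.mul m3).add (m2.mul m4)).const_mul (16:ℝ)))

lemma bind_Pker (μ : Measure T2) [SFinite μ] :
    μ.bind Pker = (volume : Measure T2).withDensity
      (fun k'' => ∫⁻ k', ENNReal.ofReal ((Phi k')⁻¹ * Rker k' k'') ∂μ) := by
  ext s hs
  rw [Measure.bind_apply hs measurable_Pker.aemeasurable, withDensity_apply _ hs]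
  have h1 : ∀ k' : T2, Pker k' s = ∫⁻ k'' in s, ENNReal.ofReal ((Phi k')⁻¹ * Rker k' k'') ∂volume :=
    fun k' => by rw [Pker, withDensity_apply _ hs]
  simp_rw [h1]
  exact lintegral_lintegral_swap measurable_rho.aemeasurable

lemma tcomp_zero (k : T2) : tcomp k 0 = k.1 := rfl

lemma tcomp_one (k : T2) : tcomp k 1 = k.2 := rfl

lemma tcomp_le (k : T2) (β : Fin 2) : sin2 (tcomp k β) ≤ sin2 k.1 + sin2 k.2 := by
  fin_cases β
  · exact le_add_of_nonneg_right (sin2_nonneg _)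
  · exact le_add_of_nonneg_left (sin2_nonneg _)

lemma measurable_tcomp (β : Fin 2) : Measurable (fun k : T2 => sin2 (tcomp k β)) := by
  fin_cases β
  · exact measurable_sin2.comp measurable_fst
  · exact measurable_sin2.comp measurable_snd

lemma measurable_term (β γ : Fin 2) :
    Measurable (fun k : T2 => sin2 (tcomp k β) * sin2 (tcomp k γ) / (sin2 k.1 + sin2 k.2)) :=
  ((measurable_tcomp β).mul (measurable_tcomp γ)).div
    ((measurable_sin2.comp measurable_fst).add (measurable_sin2.comp measurable_snd))

lemma sin2_le_one (x : Torus) : sin2 x ≤ 1 := by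
  induction x using QuotientAddGroup.induction_on with
  | H y =>
    rw [sin2_coe]
    calc Real.sin (π * y) ^ 2 = |Real.sin (π * y)| ^ 2 := (sq_abs _).symm
    _ ≤ 1 ^ 2 := by gcongr; exact Real.abs_sin_le_one _
    _ = 1 := one_pow 2

lemma term_nonneg (β γ : Fin 2) (k : T2) :
    0 ≤ sin2 (tcomp k β) * sin2 (tcomp k γ) / (sin2 k.1 + sin2 k.2) :=
  div_nonneg (mul_nonneg (sin2_nonneg _) (sin2_nonneg _))
    (add_nonneg (sin2_nonneg _) (sin2_nonneg _))

lemma term_le_one (β γ : Fin 2) (k : T2) :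
    sin2 (tcomp k β) * sin2 (tcomp k γ) / (sin2 k.1 + sin2 k.2) ≤ 1 := by
  set s := sin2 k.1 + sin2 k.2 with hs
  rcases eq_or_lt_of_le (add_nonneg (sin2_nonneg k.1) (sin2_nonneg k.2)) with h | h
  · have hb : sin2 (tcomp k β) = 0 :=
      le_antisymm ((tcomp_le k β).trans h.ge) (sin2_nonneg _)
    simp [hb]
  · rw [div_le_one h]
    calc sin2 (tcomp k β) * sin2 (tcomp k γ) ≤ s * 1 :=
      mul_le_mul (tcomp_le k β) (sin2_le_one _) (sin2_nonneg _) (le_of_lt h)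
    _ = s := mul_one s

lemma integrable_term (β γ : Fin 2) :
    Integrable (fun k : T2 => sin2 (tcomp k β) * sin2 (tcomp k γ) / (sin2 k.1 + sin2 k.2))
      (volume : Measure T2) := by
  refine (integrable_const (1:ℝ)).mono' (measurable_term β γ).aestronglyMeasurable ?_
  refine Filter.Eventually.of_forall fun k => ?_
  rw [Real.norm_eq_abs, abs_of_nonneg (term_nonneg β γ k)]
  exact term_le_one β γ k

lemma integral_swap_T2 (f : T2 → ℝ) :
    ∫ k : T2, f (k.2, k.1) = ∫ k : T2, f k := by
  have hmp : MeasurePreserving (Prod.swap : T2 → T2)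
      ((volume : Measure Torus).prod volume) ((volume : Measure Torus).prod volume) :=
    Measure.measurePreserving_swap
  exact hmp.integral_comp (MeasurableEquiv.prodComm : T2 ≃ᵐ T2).measurableEmbedding f

lemma aEnt (β γ : Fin 2) :
    2 * ∫ k : T2, sin2 (tcomp k β) * sin2 (tcomp k γ) / (sin2 k.1 + sin2 k.2) = aMat β γ := by
  fin_cases β <;> fin_cases γ
  · show _ = aMat 0 0
    simp only [aMat, Matrix.of_apply, if_pos rfl]
    congr 1
    exact integral_congr_ae (Filter.Eventually.of_forall fun k => by
      show sin2 k.1 * sin2 k.1 / _ = sin2 k.1 ^ 2 / _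
      rw [pow_two])
  · show _ = aMat 0 1
    simp only [aMat, Matrix.of_apply, if_neg (by decide : (0 : Fin 2) ≠ 1)]
    rfl
  · show _ = aMat 1 0
    simp only [aMat, Matrix.of_apply, if_neg (by decide : (1 : Fin 2) ≠ 0)]
    congr 1
    exact integral_congr_ae (Filter.Eventually.of_forall fun k => by
      show sin2 k.2 * sin2 k.1 / _ = sin2 k.1 * sin2 k.2 / _
      rw [mul_comm])
  · show _ = aMat 1 1
    simp only [aMat, Matrix.of_apply, if_pos rfl]
    congr 1
    have := integral_swap_T2 (fun k : T2 => (sin2 k.1) ^ 2 / (sin2 k.1 + sin2 k.2))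
    rw [← this]
    exact integral_congr_ae (Filter.Eventually.of_forall fun k => by
      show sin2 k.2 * sin2 k.2 / (sin2 k.1 + sin2 k.2) = sin2 k.2 ^ 2 / (sin2 k.2 + sin2 k.1)
      rw [add_comm (sin2 k.2) (sin2 k.1), pow_two])

lemma aMat_nonneg (i j : Fin 2) : 0 ≤ aMat i j := by
  have h1 : 0 ≤ ∫ k : T2, (sin2 k.1) ^ 2 / (sin2 k.1 + sin2 k.2) :=
    integral_nonneg fun k => div_nonneg (sq_nonneg _) (add_nonneg (sin2_nonneg _) (sin2_nonneg _))
  have h2 : 0 ≤ ∫ k : T2, sin2 k.1 * sin2 k.2 / (sin2 k.1 + sin2 k.2) :=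
    integral_nonneg fun k => div_nonneg (mul_nonneg (sin2_nonneg _) (sin2_nonneg _))
      (add_nonneg (sin2_nonneg _) (sin2_nonneg _))
  unfold aMat
  by_cases h : i = j <;> simp [h] <;> positivity

lemma aPow_nonneg (n : ℕ) (i j : Fin 2) : 0 ≤ (aMat ^ n) i j := by
  induction n generalizing i j with
  | zero => rw [pow_zero]; by_cases h : i = j <;> simp [Matrix.one_apply, h]
  | succ n ih =>
    rw [pow_succ, Matrix.mul_apply]
    exact Finset.sum_nonneg fun b _ => mul_nonneg (ih i b) (aMat_nonneg b j)

lemma Amat_nonneg (m : ℕ) (i j : Fin 2) : 0 ≤ Amat m i j := aPow_nonneg _ i j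

lemma step_lintegral (c : Fin 2 → ℝ) (hc : ∀ β, 0 ≤ c β) (k'' : T2) :
    ∫⁻ k', ENNReal.ofReal (∑ β : Fin 2, c β * sin2 (tcomp k' β))
        * ENNReal.ofReal ((Phi k')⁻¹ * Rker k' k'') ∂(volume : Measure T2)
    = ENNReal.ofReal (∑ γ : Fin 2, (∑ β : Fin 2, c β * aMat β γ) * sin2 (tcomp k'' γ)) := by
  have hf0 : ∀ k' : T2, 0 ≤ ∑ β : Fin 2, c β * sin2 (tcomp k' β) := fun k' =>
    Finset.sum_nonneg fun β _ => mul_nonneg (hc β) (sin2_nonneg _)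
  have hpt : ∀ k' : T2,
      (∑ β : Fin 2, c β * sin2 (tcomp k' β)) * ((Phi k')⁻¹ * Rker k' k'')
      = ∑ β : Fin 2, ∑ γ : Fin 2, (c β * sin2 (tcomp k'' γ)) *
          (2 * (sin2 (tcomp k' β) * sin2 (tcomp k' γ) / (sin2 k'.1 + sin2 k'.2))) := by
    intro k'
    have hinv : (Phi k')⁻¹ = 8⁻¹ * (sin2 k'.1 + sin2 k'.2)⁻¹ := by
      rw [Phi, mul_inv]
    rw [hinv, Rker]
    simp only [Fin.sum_univ_two, tcomp_zero, tcomp_one]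
    ring
  have hterm : ∀ β γ : Fin 2, Integrable (fun k' : T2 =>
      (c β * sin2 (tcomp k'' γ)) *
        (2 * (sin2 (tcomp k' β) * sin2 (tcomp k' γ) / (sin2 k'.1 + sin2 k'.2))))
      (volume : Measure T2) := fun β γ =>
    (((integrable_term β γ).const_mul 2).const_mul _)
  calc ∫⁻ k', ENNReal.ofReal (∑ β : Fin 2, c β * sin2 (tcomp k' β))
        * ENNReal.ofReal ((Phi k')⁻¹ * Rker k' k'') ∂(volume : Measure T2)
      = ∫⁻ k', ENNReal.ofReal (∑ β : Fin 2, ∑ γ : Fin 2, (c β * sin2 (tcomp k'' γ)) *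
          (2 * (sin2 (tcomp k' β) * sin2 (tcomp k' γ) / (sin2 k'.1 + sin2 k'.2)))) ∂volume := by
        refine lintegral_congr fun k' => ?_
        rw [← ENNReal.ofReal_mul (hf0 k'), hpt k']
    _ = ENNReal.ofReal (∫ k', ∑ β : Fin 2, ∑ γ : Fin 2, (c β * sin2 (tcomp k'' γ)) *
          (2 * (sin2 (tcomp k' β) * sin2 (tcomp k' γ) / (sin2 k'.1 + sin2 k'.2))) ∂volume) := by
        rw [ofReal_integral_eq_lintegral_ofReal]
        · exact integrable_finset_sum _ fun β _ => integrable_finset_sum _ fun γ _ => hterm β γ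
        · refine Filter.Eventually.of_forall fun k' => ?_
          refine Finset.sum_nonneg fun β _ => Finset.sum_nonneg fun γ _ => ?_
          exact mul_nonneg (mul_nonneg (hc β) (sin2_nonneg _))
            (mul_nonneg (by norm_num) (term_nonneg β γ k'))
    _ = ENNReal.ofReal (∑ γ : Fin 2, (∑ β : Fin 2, c β * aMat β γ) * sin2 (tcomp k'' γ)) := by
        congr 1
        rw [integral_finset_sum _ fun β _ => integrable_finset_sum _ fun γ _ => hterm β γ]
        have : ∀ β : Fin 2, (∫ k', ∑ γ : Fin 2, (c β * sin2 (tcomp k'' γ)) *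
            (2 * (sin2 (tcomp k' β) * sin2 (tcomp k' γ) / (sin2 k'.1 + sin2 k'.2))) ∂(volume : Measure T2))
            = ∑ γ : Fin 2, (c β * sin2 (tcomp k'' γ)) * aMat β γ := by
          intro β
          rw [integral_finset_sum _ fun γ _ => hterm β γ]
          refine Finset.sum_congr rfl fun γ _ => ?_
          rw [integral_const_mul, integral_const_mul, aEnt β γ]
        simp_rw [this]
        simp only [Fin.sum_univ_two]
        ring

lemma measurable_coefDensity (c : Fin 2 → ℝ) :
    Measurable (fun k' : T2 => ENNReal.ofReal (∑ β : Fin 2, c β * sin2 (tcomp k' β))) :=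
  ENNReal.measurable_ofReal.comp
    (Finset.measurable_sum _ fun β _ => (measurable_tcomp β).const_mul _)

lemma step (c : Fin 2 → ℝ) (hc : ∀ β, 0 ≤ c β) :
    ((volume : Measure T2).withDensity fun k' =>
        ENNReal.ofReal (∑ β : Fin 2, c β * sin2 (tcomp k' β))).bind Pker
    = (volume : Measure T2).withDensity fun k'' =>
        ENNReal.ofReal (∑ γ : Fin 2, (∑ β : Fin 2, c β * aMat β γ) * sin2 (tcomp k'' γ)) := by
  rw [bind_Pker]
  congr 1
  funext k''
  have hg : Measurable fun k' : T2 => ENNReal.ofReal ((Phi k')⁻¹ * Rker k' k'') :=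
    measurable_rho.comp (measurable_id.prodMk measurable_const)
  rw [lintegral_withDensity_eq_lintegral_mul _ (measurable_coefDensity c) hg]
  simp only [Pi.mul_apply]
  exact step_lintegral c hc k''

lemma Pn_density (m : ℕ) (hm : 1 ≤ m) (k : T2) :
    Pn m k = (volume : Measure T2).withDensity fun k' =>
      ENNReal.ofReal (∑ β : Fin 2,
        (2 / (sin2 k.1 + sin2 k.2) * ∑ α : Fin 2, sin2 (tcomp k α) * Amat m α β)
          * sin2 (tcomp k' β)) := by
  induction m, hm using Nat.le_induction with
  | base =>
    show (Measure.dirac k).bind Pker = _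
    rw [Measure.dirac_bind measurable_Pker]
    rw [Pker]
    congr 1
    funext k'
    congr 1
    have h1 : Amat 1 = (1 : Matrix (Fin 2) (Fin 2) ℝ) := by
      rw [Amat]; norm_num
    rw [h1, Phi, Rker, mul_inv]
    norm_num [Fin.sum_univ_two, tcomp_zero, tcomp_one, Matrix.one_apply]
    ring
  | succ m hm ih =>
    show (Pn m k).bind Pker = _
    rw [ih]
    have hc : ∀ β : Fin 2,
        0 ≤ 2 / (sin2 k.1 + sin2 k.2) * ∑ α : Fin 2, sin2 (tcomp k α) * Amat m α β := by
      intro β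
      refine mul_nonneg (div_nonneg (by norm_num)
        (add_nonneg (sin2_nonneg _) (sin2_nonneg _))) ?_
      exact Finset.sum_nonneg fun α _ => mul_nonneg (sin2_nonneg _) (Amat_nonneg m α β)
    rw [step _ hc]
    congr 1
    funext k''
    congr 1
    have hA : Amat (m + 1) = Amat m * aMat := by
      rw [Amat, Amat, Nat.add_sub_cancel, ← pow_succ]
      congr 1
      omega
    rw [hA]
    simp only [Fin.sum_univ_two, Matrix.mul_apply]
    ring

/-- Explicit form of the `m`-step transition kernel:
`Pᵐ(k,dk') = (2/∑_γ sin²(πk_γ)) ∑_{α,β} sin²(πk_α) A^(m)_{αβ} sin²(πk'_β) dk'`. -/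
theorem Pn_explicit_form (m : ℕ) (hm : 1 ≤ m) (k : T2) :
    Pn m k = (volume : Measure T2).withDensity fun k' =>
      ENNReal.ofReal ((2 / (sin2 k.1 + sin2 k.2)) *
        ∑ α : Fin 2, ∑ β : Fin 2,
          sin2 (tcomp k α) * Amat m α β * sin2 (tcomp k' β)) := by
  rw [Pn_density m hm k]
  congr 1
  funext k'
  congr 1
  simp only [Fin.sum_univ_two]
  ring

end
end
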